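/- For any two ℤ^d-invariant probability measures μ and ν on {0,1}^{ℤ^d}, one has |H(μ) − H(ν)| ≤ H[d̄(μ,ν)]. -/

import Mathlib

open MeasureTheory Matrix Filter Topology
open scoped ENNReal Real

noncomputable section

abbrev Torus (d : ℕ) : Type := Fin d → AddCircle (1 : ℝ)

abbrev Config (d : ℕ) : Type := (Fin d → ℤ) → Bool

/-- The character `e_k : x ↦ e^{2πi k·x}` on the `d`-dimensional torus. -/
def charFn {d : ℕ} (k : Fin d → ℤ) (x : Torus d) : ℂ := ∏ i, (fourier (k i) (x i) : ℂ)

/-- The Fourier coefficient `f̂(k) = ∫ f(x) e^{-2πi k·x} dλ_d(x)`. -/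
def fCoeff {d : ℕ} (f : Torus d → ℝ) (k : Fin d → ℤ) : ℂ :=
  ∫ x : Torus d, (f x : ℂ) * charFn (-k) x ∂volume

/-- Translation of configurations by `v ∈ ℤ^d`. -/
def shiftC {d : ℕ} (v : Fin d → ℤ) (η : Config d) : Config d := fun k => η (k + v)

/-- `P` is the determinantal measure associated to `f`. -/
def IsDeterminantal {d : ℕ} (f : Torus d → ℝ) (P : Measure (Config d)) : Prop :=
  ∀ (n : ℕ) (e : Fin n → (Fin d → ℤ)), Function.Injective e →
    (((P {η : Config d | ∀ i, η (e i) = true}).toReal : ℝ) : ℂ) =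
      Matrix.det (Matrix.of fun i j : Fin n => fCoeff f (e j - e i))

/-- The set of `ℤ^d`-invariant couplings of `μ` and `ν`. -/
def invCouplings {d : ℕ} (μ ν : Measure (Config d)) : Set (Measure (Config d × Config d)) :=
  {m | IsProbabilityMeasure m ∧
    (∀ v : Fin d → ℤ, Measure.map (Prod.map (shiftC v) (shiftC v)) m = m) ∧
    Measure.map Prod.fst m = μ ∧ Measure.map Prod.snd m = ν}

/-- The `d̄`-distance between `ℤ^d`-invariant measures on `{0,1}^{ℤ^d}`. -/
def dbar {d : ℕ} (μ ν : Measure (Config d)) : ℝ≥0∞ :=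
  sInf ((fun m : Measure (Config d × Config d) =>
    m {p : Config d × Config d | p.1 0 ≠ p.2 0}) '' invCouplings μ ν)

/-- The cylinder event over the box `B_n = ([-n,n] ∩ ℤ)^d` specified by `a`. -/
def cylEventBox {d : ℕ} (n : ℕ)
    (a : (Fin d → (Finset.Icc (-(n : ℤ)) (n : ℤ))) → Bool) : Set (Config d) :=
  {η | ∀ k : Fin d → (Finset.Icc (-(n : ℤ)) (n : ℤ)), η (fun i => (k i : ℤ)) = a k}

/-- The Shannon entropy of the restriction of `μ` to the box `B_n`. -/
def blockEntropy {d : ℕ} (μ : Measure (Config d)) (n : ℕ) : ℝ :=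
  ∑ a : (Fin d → (Finset.Icc (-(n : ℤ)) (n : ℤ))) → Bool,
    Real.negMulLog (μ (cylEventBox n a)).toReal

/-- `h` is the entropy of the `ℤ^d`-process `μ`:
`h = lim_n H_n(μ)/(2n+1)^d`. -/
def HasEntropy {d : ℕ} (μ : Measure (Config d)) (h : ℝ) : Prop :=
  Tendsto (fun n : ℕ => blockEntropy μ n / (2 * (n : ℝ) + 1) ^ d) atTop (𝓝 h)

/-- The binary entropy function `H[p] = -p log p - (1-p) log (1-p)`. -/
def H2 (p : ℝ) : ℝ := Real.negMulLog p + Real.negMulLog (1 - p)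


namespace S16
variable {Ω : Type*} [MeasurableSpace Ω]

lemma negMulLog_add_le {a b : ℝ} (ha : 0 ≤ a) (hb : 0 ≤ b) :
    Real.negMulLog (a + b) ≤ Real.negMulLog a + Real.negMulLog b := by
  rcases ha.eq_or_lt with h | h
  · simp [← h]
  rcases hb.eq_or_lt with h' | h'
  · simp [← h']
  have h1 : -a * Real.log (a + b) ≤ -a * Real.log a := by
    have := Real.log_le_log h (by linarith : a ≤ a + b)
    nlinarith
  have h2 : -b * Real.log (a + b) ≤ -b * Real.log b := by
    have := Real.log_le_log h' (by linarith : b ≤ a + b)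
    nlinarith
  simp only [Real.negMulLog]
  nlinarith

lemma negMulLog_sum_le {ι : Type*} (s : Finset ι) (f : ι → ℝ) (hf : ∀ i ∈ s, 0 ≤ f i) :
    Real.negMulLog (∑ i ∈ s, f i) ≤ ∑ i ∈ s, Real.negMulLog (f i) := by
  classical
  induction s using Finset.induction_on with
  | empty => simp
  | insert a t hx ih =>
    rw [Finset.sum_insert hx, Finset.sum_insert hx]
    have h1 : 0 ≤ f a := hf a (Finset.mem_insert_self a t)
    have h2 : 0 ≤ ∑ i ∈ t, f i :=
      Finset.sum_nonneg fun i hi => hf i (Finset.mem_insert_of_mem hi)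
    calc Real.negMulLog (f a + ∑ i ∈ t, f i)
        ≤ Real.negMulLog (f a) + Real.negMulLog (∑ i ∈ t, f i) := negMulLog_add_le h1 h2
      _ ≤ _ := by
          gcongr
          exact ih fun i hi => hf i (Finset.mem_insert_of_mem hi)


/-- Shannon entropy of a finitely-valued map. -/
def ent {S : Type*} [Fintype S] (m : Measure Ω) (f : Ω → S) : ℝ :=
  ∑ s : S, Real.negMulLog (m (f ⁻¹' {s})).toReal

lemma ent_comp_le {S T : Type*} [Fintype S] [Fintype T] [DecidableEq S] [DecidableEq T]
    (m : Measure Ω) [IsProbabilityMeasure m] {f : Ω → S}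
    (hf : ∀ s : S, MeasurableSet (f ⁻¹' {s})) (g : S → T) :
    ent m (g ∘ f) ≤ ent m f := by
  have key : ∀ t : T, (m ((g ∘ f) ⁻¹' {t})).toReal
      = ∑ s ∈ Finset.univ.filter (fun s => g s = t), (m (f ⁻¹' {s})).toReal := by
    intro t
    have hset : (g ∘ f) ⁻¹' {t} = ⋃ s ∈ (Finset.univ.filter (fun s => g s = t) : Finset S),
        f ⁻¹' {s} := by
      ext ω
      simp [Set.mem_iUnion, Function.comp, eq_comm]
    rw [hset, measure_biUnion_finset ?_ (fun s _ => hf s)]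
    · rw [ENNReal.toReal_sum]
      intro s _; exact measure_ne_top m _
    · intro s _ s' _ hss'
      exact Set.disjoint_left.2 fun ω h1 h2 => hss' (by
        simp only [Set.mem_preimage, Set.mem_singleton_iff] at h1 h2; rw [← h1, ← h2])
  calc ent m (g ∘ f) = ∑ t : T, Real.negMulLog
        (∑ s ∈ Finset.univ.filter (fun s => g s = t), (m (f ⁻¹' {s})).toReal) := by
        unfold ent; exact Finset.sum_congr rfl fun t _ => by rw [key t]
    _ ≤ ∑ t : T, ∑ s ∈ Finset.univ.filter (fun s => g s = t),
        Real.negMulLog (m (f ⁻¹' {s})).toReal := by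
        gcongr with t ht
        exact negMulLog_sum_le _ _ fun s _ => ENNReal.toReal_nonneg
    _ = ent m f := by
        unfold ent
        rw [Finset.sum_fiberwise_eq_sum_filter Finset.univ Finset.univ g
          (fun s => Real.negMulLog (m (f ⁻¹' {s})).toReal)]
        simp


lemma ent_pair_le {S T : Type*} [Fintype S] [Fintype T]
    (m : Measure Ω) [IsProbabilityMeasure m] {f : Ω → S} {g : Ω → T}
    (hf : ∀ s, MeasurableSet (f ⁻¹' {s})) (hg : ∀ t, MeasurableSet (g ⁻¹' {t})) :
    ent m (fun ω => (f ω, g ω)) ≤ ent m f + ent m g := by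
  classical
  set q : T → ℝ := fun t => (m (g ⁻¹' {t})).toReal with hq
  set P : S → T → ℝ := fun s t => (m (f ⁻¹' {s} ∩ g ⁻¹' {t})).toReal with hP
  set r : S → T → ℝ := fun s t => if q t = 0 then 0 else P s t / q t with hr
  have hqnn : ∀ t, 0 ≤ q t := fun t => ENNReal.toReal_nonneg
  have hrnn : ∀ s t, 0 ≤ r s t := by
    intro s t
    simp only [hr]
    split
    · exact le_rfl
    · exact div_nonneg ENNReal.toReal_nonneg (hqnn t)
  have hPq : ∀ s t, P s t = q t * r s t := by
    intro s t
    by_cases h : q t = 0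
    · simp only [hr, h, if_pos, mul_zero, if_true]
      have : m (f ⁻¹' {s} ∩ g ⁻¹' {t}) ≤ m (g ⁻¹' {t}) :=
        measure_mono Set.inter_subset_right
      have h0 : m (g ⁻¹' {t}) = 0 := by
        have := ENNReal.toReal_eq_zero_iff (m (g ⁻¹' {t})) |>.1 h
        rcases this with h' | h'
        · exact h'
        · exact absurd h' (measure_ne_top m _)
      simp [hP, le_antisymm (h0 ▸ this) zero_le]
    · simp only [hr, if_neg h]
      field_simp
  -- partition facts
  have hPsum_t : ∀ t, ∑ s, P s t = q t := by
    intro t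
    have : ∑ s, m (f ⁻¹' {s} ∩ g ⁻¹' {t}) = m (g ⁻¹' {t}) := by
      rw [← measure_biUnion_finset]
      · congr 1
        ext ω
        simp
      · intro s _ s' _ hss'
        exact Set.disjoint_left.2 fun ω h1 h2 => hss' (by
          simp only [Set.mem_inter_iff, Set.mem_preimage, Set.mem_singleton_iff] at h1 h2
          rw [← h1.1, ← h2.1])
      · exact fun s _ => (hf s).inter (hg t)
    rw [hq, hP]
    simp only
    rw [← this, ENNReal.toReal_sum (fun s _ => measure_ne_top m _)]
  have hPsum_s : ∀ s, ∑ t, P s t = (m (f ⁻¹' {s})).toReal := by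
    intro s
    have : ∑ t, m (f ⁻¹' {s} ∩ g ⁻¹' {t}) = m (f ⁻¹' {s}) := by
      rw [← measure_biUnion_finset]
      · congr 1
        ext ω
        simp
      · intro t _ t' _ htt'
        exact Set.disjoint_left.2 fun ω h1 h2 => htt' (by
          simp only [Set.mem_inter_iff, Set.mem_preimage, Set.mem_singleton_iff] at h1 h2
          rw [← h1.2, ← h2.2])
      · exact fun t _ => (hf s).inter (hg t)
    rw [hP]
    simp only
    rw [← this, ENNReal.toReal_sum (fun t _ => measure_ne_top m _)]
  have hq1 : ∑ t, q t = 1 := by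
    have : ∑ t, m (g ⁻¹' {t}) = m (g ⁻¹' (Finset.univ : Finset T)) :=
      sum_measure_preimage_singleton _ (fun t _ => hg t)
    simp only [Finset.coe_univ, Set.preimage_univ] at this
    rw [hq]
    simp only
    rw [← ENNReal.toReal_sum (fun t _ => measure_ne_top m _)] at *
    rw [this, measure_univ, ENNReal.toReal_one]
  have hrsum : ∀ t, q t ≠ 0 → ∑ s, r s t = 1 := by
    intro t ht
    simp only [hr, if_neg ht, ← Finset.sum_div, hPsum_t t, div_self ht]
  -- Jensen step
  have jensen : ∀ s : S, ∑ t, q t * Real.negMulLog (r s t)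
      ≤ Real.negMulLog (m (f ⁻¹' {s})).toReal := by
    intro s
    have := Real.concaveOn_negMulLog.le_map_sum (t := Finset.univ) (w := q) (p := fun t => r s t)
      (fun t _ => hqnn t) hq1 (fun t _ => hrnn s t)
    simp only [smul_eq_mul] at this
    calc ∑ t, q t * Real.negMulLog (r s t)
        ≤ Real.negMulLog (∑ t, q t * r s t) := this
      _ = Real.negMulLog (m (f ⁻¹' {s})).toReal := by
          rw [← hPsum_s s]
          congr 1
          exact Finset.sum_congr rfl fun t _ => (hPq s t).symm
  -- expand pair entropy
  have hpair : ∀ s t, ((fun ω => (f ω, g ω)) ⁻¹' {(s, t)}) = f ⁻¹' {s} ∩ g ⁻¹' {t} := by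
    intro s t
    ext ω
    simp [Prod.ext_iff]
  have expand : ent m (fun ω => (f ω, g ω))
      = ∑ t, ∑ s, Real.negMulLog (q t * r s t) := by
    unfold ent
    rw [Fintype.sum_prod_type]
    rw [Finset.sum_comm]
    refine Finset.sum_congr rfl fun t _ => Finset.sum_congr rfl fun s _ => ?_
    rw [hpair s t]
    exact congrArg Real.negMulLog (hPq s t)
  rw [expand]
  have step : ∀ t, ∑ s, Real.negMulLog (q t * r s t)
      = (∑ s, q t * Real.negMulLog (r s t)) + Real.negMulLog (q t) := by
    intro t
    by_cases h : q t = 0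
    · simp [h]
    · have : ∀ s, Real.negMulLog (q t * r s t)
          = q t * Real.negMulLog (r s t) + r s t * Real.negMulLog (q t) := by
        intro s
        rw [Real.negMulLog_mul]
        ring
      rw [Finset.sum_congr rfl fun s _ => this s, Finset.sum_add_distrib, ← Finset.sum_mul,
        hrsum t h, one_mul]
  calc ∑ t, ∑ s, Real.negMulLog (q t * r s t)
      = ∑ t, ((∑ s, q t * Real.negMulLog (r s t)) + Real.negMulLog (q t)) :=
        Finset.sum_congr rfl fun t _ => step t
    _ = (∑ t, ∑ s, q t * Real.negMulLog (r s t)) + ∑ t, Real.negMulLog (q t) :=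
        Finset.sum_add_distrib
    _ ≤ ent m f + ent m g := by
        unfold ent
        gcongr ?_ + ?_
        · rw [Finset.sum_comm]
          exact Finset.sum_le_sum fun s _ => jensen s
        · exact le_refl _

lemma ent_const {S : Type*} [Fintype S] [DecidableEq S] (m : Measure Ω)
    [IsProbabilityMeasure m] (c : S) : ent m (fun _ => c) = 0 := by
  unfold ent
  rw [Finset.sum_eq_single c]
  · have : ((fun _ : Ω => c) ⁻¹' {c}) = Set.univ := by ext ω; simp
    simp [this]
  · intro s _ hs
    have : ((fun _ : Ω => c) ⁻¹' {s}) = ∅ := by ext ω; simp [Ne.symm hs]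
    simp [this]
  · simp



lemma ent_pi_le {A : Type*} [Fintype A] [DecidableEq A]
    (m : Measure Ω) [IsProbabilityMeasure m] (f : Ω → A → Bool)
    (hf : ∀ k b, MeasurableSet ((fun ω => f ω k) ⁻¹' {b})) :
    ent m f ≤ ∑ k : A, ent m (fun ω => f ω k) := by
  classical
  -- masked versions
  set F : Finset A → Ω → A → Bool := fun s ω k => if k ∈ s then f ω k else false with hF
  have hmeas : ∀ s : Finset A, ∀ a : A → Bool, MeasurableSet (F s ⁻¹' {a}) := by
    intro s a
    have : F s ⁻¹' {a} = ⋂ j : A,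
        (if j ∈ s then ((fun ω => f ω j) ⁻¹' {a j})
         else (if a j = false then Set.univ else ∅)) := by
      ext ω
      simp only [Set.mem_preimage, Set.mem_singleton_iff, Set.mem_iInter, hF, funext_iff]
      refine forall_congr' fun j => ?_
      by_cases hj : j ∈ s
      · simp [hj]
      · by_cases ha : a j = false <;> simp [hj, ha, eq_comm]
    rw [this]
    refine MeasurableSet.iInter fun j => ?_
    split
    · exact hf j (a j)
    · split <;> simp
  have main : ∀ s : Finset A, ent m (F s) ≤ ∑ k ∈ s, ent m (fun ω => f ω k) := by
    intro s
    induction s using Finset.induction_on with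
    | empty =>
      have : F ∅ = fun _ => (fun _ => false) := by funext ω k; simp [hF]
      rw [this, ent_const]
      simp
    | insert a t hx ih =>
      have hdecomp : F (insert a t) = (fun p : Bool × (A → Bool) =>
          (fun j => if j = a then p.1 else p.2 j)) ∘ (fun ω => (f ω a, F t ω)) := by
        funext ω
        funext j
        simp only [Function.comp, hF, Finset.mem_insert]
        by_cases hj : j = a
        · simp [hj]
        · simp [hj]
      calc ent m (F (insert a t)) ≤ ent m (fun ω => (f ω a, F t ω)) := by
            rw [hdecomp]
            refine ent_comp_le m ?_ _
            intro p
            have : ((fun ω => (f ω a, F t ω)) ⁻¹' {p})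
                = ((fun ω => f ω a) ⁻¹' {p.1}) ∩ (F t ⁻¹' {p.2}) := by
              ext ω; simp [Prod.ext_iff]
            rw [this]
            exact (hf a p.1).inter (hmeas t p.2)
        _ ≤ ent m (fun ω => f ω a) + ent m (F t) :=
            ent_pair_le m (hf a) (hmeas t)
        _ ≤ ent m (fun ω => f ω a) + ∑ k ∈ t, ent m (fun ω => f ω k) := by gcongr
        _ = ∑ k ∈ insert a t, ent m (fun ω => f ω k) := by rw [Finset.sum_insert hx]
  have : F Finset.univ = f := by funext ω k; simp [hF]
  calc ent m f = ent m (F Finset.univ) := by rw [this]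
    _ ≤ ∑ k ∈ Finset.univ, ent m (fun ω => f ω k) := main Finset.univ
    _ = _ := rfl

lemma fiber_pi_meas {A : Type*} [Countable A] {f : Ω → A → Bool}
    (hf : ∀ k, Measurable fun ω => f ω k) (a : A → Bool) :
    MeasurableSet (f ⁻¹' {a}) := by
  have : f ⁻¹' {a} = ⋂ k, (fun ω => f ω k) ⁻¹' {a k} := by
    ext ω
    simp [funext_iff]
  rw [this]
  exact MeasurableSet.iInter fun k => (hf k) (measurableSet_singleton _)



lemma measurable_shiftC {d : ℕ} (v : Fin d → ℤ) : Measurable (shiftC (d := d) v) :=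
  measurable_pi_lambda _ fun k => measurable_pi_apply (k + v)



lemma key {d : ℕ} {μ ν : Measure (Config d)} {m : Measure (Config d × Config d)}
    (hm : m ∈ invCouplings μ ν) (n : ℕ) :
    |blockEntropy μ n - blockEntropy ν n| ≤
      (2 * (n : ℝ) + 1) ^ d *
        H2 ((m {p : Config d × Config d | p.1 0 ≠ p.2 0}).toReal) := by
  classical
  obtain ⟨hm1, hminv, hmfst, hmsnd⟩ := hm
  haveI := hm1
  set A := (Fin d → (Finset.Icc (-(n : ℤ)) (n : ℤ))) with hA
  set p : ℝ := (m {q : Config d × Config d | q.1 0 ≠ q.2 0}).toReal with hp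
  set ι : A → (Fin d → ℤ) := fun k i => (k i : ℤ) with hι
  set X : Config d × Config d → A → Bool := fun ω k => ω.1 (ι k) with hX
  set Y : Config d × Config d → A → Bool := fun ω k => ω.2 (ι k) with hY
  set Z : Config d × Config d → A → Bool := fun ω k => xor (X ω k) (Y ω k) with hZ
  have hXk : ∀ k, Measurable fun ω => X ω k :=
    fun k => (measurable_pi_apply (ι k)).comp measurable_fst
  have hYk : ∀ k, Measurable fun ω => Y ω k :=
    fun k => (measurable_pi_apply (ι k)).comp measurable_snd
  have hZk : ∀ k, Measurable fun ω => Z ω k := by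
    intro k
    exact (measurable_of_countable (fun bp : Bool × Bool => xor bp.1 bp.2)).comp
      ((hXk k).prodMk (hYk k))
  -- measurable fibers
  have hXf : ∀ a, MeasurableSet (X ⁻¹' {a}) := fiber_pi_meas hXk
  have hYf : ∀ a, MeasurableSet (Y ⁻¹' {a}) := fiber_pi_meas hYk
  have hZf : ∀ a, MeasurableSet (Z ⁻¹' {a}) := fiber_pi_meas hZk
  -- relation to blockEntropy
  have hW : ∀ (W : Config d → A → Bool), (W = fun η k => η (ι k)) →
      ∀ a, cylEventBox n a = W ⁻¹' {a} := by
    intro W hWdef a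
    ext η
    simp [cylEventBox, hWdef, funext_iff, hι]
    exact Iff.rfl
  set W : Config d → A → Bool := fun η k => η (ι k) with hWdef
  have hWk : ∀ k, Measurable fun η => W η k := fun k => measurable_pi_apply (ι k)
  have hcylmeas : ∀ a : A → Bool, MeasurableSet (cylEventBox (d := d) n a) := by
    intro a
    rw [hW W rfl a]
    exact fiber_pi_meas hWk a
  have hBX : blockEntropy μ n = ent m X := by
    unfold blockEntropy ent
    refine Finset.sum_congr rfl fun a _ => ?_
    congr 2
    rw [← hmfst, Measure.map_apply measurable_fst (hcylmeas a), hW W rfl a]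
    congr 1
  have hBY : blockEntropy ν n = ent m Y := by
    unfold blockEntropy ent
    refine Finset.sum_congr rfl fun a _ => ?_
    congr 2
    rw [← hmsnd, Measure.map_apply measurable_snd (hcylmeas a), hW W rfl a]
    congr 1
  -- entropy of each Z coordinate
  have hD0meas : MeasurableSet {q : Config d × Config d | q.1 0 ≠ q.2 0} := by
    have : {q : Config d × Config d | q.1 0 ≠ q.2 0}
        = (fun q : Config d × Config d => (q.1 0, q.2 0)) ⁻¹'
          {bp : Bool × Bool | bp.1 ≠ bp.2} := rfl
    rw [this]
    exact (((measurable_pi_apply 0).comp measurable_fst).prodMk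
      ((measurable_pi_apply 0).comp measurable_snd))
      ((Set.to_countable _).measurableSet)
  have hZent : ∀ k, ent m (fun ω => Z ω k) = H2 p := by
    intro k
    have htrue : ((fun ω => Z ω k) ⁻¹' {true})
        = {ω : Config d × Config d | ω.1 (ι k) ≠ ω.2 (ι k)} := by
      ext ω
      simp only [Set.mem_preimage, Set.mem_singleton_iff, hZ, hX, hY, Set.mem_setOf_eq]
      cases h1 : ω.1 (ι k) <;> cases h2 : ω.2 (ι k) <;> simp
    have hfalse : ((fun ω => Z ω k) ⁻¹' {false})
        = {ω : Config d × Config d | ω.1 (ι k) ≠ ω.2 (ι k)}ᶜ := by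
      ext ω
      simp only [Set.mem_preimage, Set.mem_singleton_iff, hZ, hX, hY, Set.mem_compl_iff,
        Set.mem_setOf_eq, not_not]
      cases h1 : ω.1 (ι k) <;> cases h2 : ω.2 (ι k) <;> simp
    have hDkmeas : MeasurableSet {ω : Config d × Config d | ω.1 (ι k) ≠ ω.2 (ι k)} := by
      rw [← htrue]
      exact (hZk k) (measurableSet_singleton _)
    have hmeq : m {ω : Config d × Config d | ω.1 (ι k) ≠ ω.2 (ι k)}
        = m {q : Config d × Config d | q.1 0 ≠ q.2 0} := by
      conv_rhs => rw [← hminv (ι k)]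
      rw [Measure.map_apply ((measurable_shiftC (ι k)).prodMap (measurable_shiftC (ι k)))
        hD0meas]
      congr 1
      ext ω
      simp [shiftC, Prod.map]
    have hcompl : m ({ω : Config d × Config d | ω.1 (ι k) ≠ ω.2 (ι k)}ᶜ)
        = 1 - m {ω : Config d × Config d | ω.1 (ι k) ≠ ω.2 (ι k)} :=
      prob_compl_eq_one_sub hDkmeas
    unfold ent
    rw [Fintype.sum_bool, htrue, hfalse, hcompl, hmeq,
      ENNReal.toReal_sub_of_le prob_le_one ENNReal.one_ne_top, ENNReal.toReal_one]
    rfl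
  -- main inequality in both directions
  have hcard : ∑ _k : A, H2 p = (2 * (n : ℝ) + 1) ^ d * H2 p := by
    rw [Finset.sum_const, nsmul_eq_mul]
    congr 1
    have hcA : Fintype.card A = (2 * n + 1) ^ d := by
      show Fintype.card (Fin d → (Finset.Icc (-(n : ℤ)) (n : ℤ))) = (2 * n + 1) ^ d
      rw [Fintype.card_fun, Fintype.card_coe, Int.card_Icc, Fintype.card_fin]
      congr 1
      omega
    rw [Finset.card_univ, hcA]
    push_cast
    ring
  have hmain : ∀ (U V : Config d × Config d → A → Bool),
      (∀ k, Measurable fun ω => U ω k) → (∀ k, Measurable fun ω => V ω k) →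
      (∀ ω k, U ω k = xor (V ω k) (Z ω k)) →
      ent m U ≤ ent m V + (2 * (n : ℝ) + 1) ^ d * H2 p := by
    intro U V hU hV hUV
    have hdecomp : U = (fun pr : (A → Bool) × (A → Bool) => fun k => xor (pr.1 k) (pr.2 k)) ∘
        (fun ω => (V ω, Z ω)) := by
      funext ω
      funext k
      exact hUV ω k
    have hpairf : ∀ s : (A → Bool) × (A → Bool),
        MeasurableSet ((fun ω => (V ω, Z ω)) ⁻¹' {s}) := by
      intro s
      have : ((fun ω => (V ω, Z ω)) ⁻¹' {s}) = V ⁻¹' {s.1} ∩ Z ⁻¹' {s.2} := by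
        ext ω
        simp [Prod.ext_iff]
      rw [this]
      exact (fiber_pi_meas hV s.1).inter (hZf s.2)
    calc ent m U = ent m ((fun pr : (A → Bool) × (A → Bool) => fun k => xor (pr.1 k) (pr.2 k)) ∘
            (fun ω => (V ω, Z ω))) := by rw [← hdecomp]
      _ ≤ ent m (fun ω => (V ω, Z ω)) := ent_comp_le m hpairf _
      _ ≤ ent m V + ent m Z := ent_pair_le m (fiber_pi_meas hV) hZf
      _ ≤ ent m V + ∑ k : A, ent m (fun ω => Z ω k) := by
          gcongr
          exact ent_pi_le m Z fun k b => (hZk k) (measurableSet_singleton _)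
      _ = ent m V + (2 * (n : ℝ) + 1) ^ d * H2 p := by
          rw [← hcard]
          congr 1
          exact Finset.sum_congr rfl fun k _ => hZent k
  rw [hBX, hBY, abs_sub_le_iff]
  constructor
  · have := hmain X Y hXk hYk (by
      intro ω k
      simp only [hZ]
      cases hx : X ω k <;> cases hy : Y ω k <;> simp [hx, hy])
    linarith
  · have := hmain Y X hYk hXk (by
      intro ω k
      simp only [hZ]
      cases hx : X ω k <;> cases hy : Y ω k <;> simp [hx, hy])
    linarith



lemma limit_le {d : ℕ} {μ ν : Measure (Config d)} {hμent hνent : ℝ}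
    (hμh : HasEntropy μ hμent) (hνh : HasEntropy ν hνent) {c : ℝ}
    (hbound : ∀ n : ℕ, |blockEntropy μ n - blockEntropy ν n| ≤ (2 * (n : ℝ) + 1) ^ d * c) :
    |hμent - hνent| ≤ c := by
  have hD : ∀ n : ℕ, (0 : ℝ) < (2 * (n : ℝ) + 1) ^ d := fun n => by positivity
  have htend : Tendsto (fun n : ℕ => |blockEntropy μ n / (2 * (n : ℝ) + 1) ^ d
      - blockEntropy ν n / (2 * (n : ℝ) + 1) ^ d|) atTop (𝓝 |hμent - hνent|) :=
    (hμh.sub hνh).abs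
  refine le_of_tendsto htend (Eventually.of_forall fun n => ?_)
  rw [div_sub_div_same, abs_div, abs_of_pos (hD n), div_le_iff₀ (hD n)]
  calc |blockEntropy μ n - blockEntropy ν n| ≤ (2 * (n : ℝ) + 1) ^ d * c := hbound n
    _ = c * (2 * (n : ℝ) + 1) ^ d := mul_comm _ _


end S16

/-- For `ℤ^d`-invariant `μ, ν` on `{0,1}^{ℤ^d}`,
`|H(μ) − H(ν)| ≤ H[d̄(μ,ν)]`. -/
theorem statement16 {d : ℕ} (μ ν : Measure (Config d))
    (hμ : IsProbabilityMeasure μ) (hν : IsProbabilityMeasure ν)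
    (hμinv : ∀ v : Fin d → ℤ, Measure.map (shiftC v) μ = μ)
    (hνinv : ∀ v : Fin d → ℤ, Measure.map (shiftC v) ν = ν)
    (hμent : ℝ) (hνent : ℝ)
    (hμh : HasEntropy μ hμent) (hνh : HasEntropy ν hνent) :
    |hμent - hνent| ≤ H2 ((dbar μ ν).toReal) := by
  have prodmem : (μ.prod ν) ∈ invCouplings μ ν := by
    refine ⟨inferInstance, ?_, ?_, ?_⟩
    · intro v
      rw [← Measure.map_prod_map _ _ (S16.measurable_shiftC v) (S16.measurable_shiftC v),
        hμinv v, hνinv v]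
    · simp
    · simp
  have hdle : dbar μ ν ≤ (μ.prod ν) {p : Config d × Config d | p.1 0 ≠ p.2 0} :=
    sInf_le ⟨μ.prod ν, prodmem, rfl⟩
  have hdtop : dbar μ ν ≠ ⊤ :=
    ne_top_of_le_ne_top (measure_ne_top _ _) hdle
  refine le_of_forall_pos_le_add fun ε hε => ?_
  have hcont : ContinuousAt H2 ((dbar μ ν).toReal) := by
    have : Continuous H2 := by
      unfold H2
      exact Real.continuous_negMulLog.add
        (Real.continuous_negMulLog.comp (continuous_const.sub continuous_id))
    exact this.continuousAt
  obtain ⟨δ, hδpos, hδ⟩ := Metric.continuousAt_iff.1 hcont ε hε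
  have hlt : dbar μ ν < dbar μ ν + ENNReal.ofReal δ :=
    ENNReal.lt_add_right hdtop (by simp [ENNReal.ofReal_pos.2 hδpos, (ENNReal.ofReal_pos.2 hδpos).ne'])
  obtain ⟨t, ht, htlt⟩ := sInf_lt_iff.1 (show sInf ((fun m : Measure (Config d × Config d) =>
      m {p : Config d × Config d | p.1 0 ≠ p.2 0}) '' invCouplings μ ν)
      < dbar μ ν + ENNReal.ofReal δ from hlt)
  obtain ⟨m, hmem, rfl⟩ := ht
  haveI := hmem.1
  have h1 : |hμent - hνent| ≤
      H2 ((m {p : Config d × Config d | p.1 0 ≠ p.2 0}).toReal) :=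
    S16.limit_le hμh hνh (fun n => S16.key hmem n)
  have htne : m {p : Config d × Config d | p.1 0 ≠ p.2 0} ≠ ⊤ := measure_ne_top _ _
  have hge : (dbar μ ν).toReal ≤ (m {p : Config d × Config d | p.1 0 ≠ p.2 0}).toReal :=
    ENNReal.toReal_mono htne (sInf_le ⟨m, hmem, rfl⟩)
  have hltR : (m {p : Config d × Config d | p.1 0 ≠ p.2 0}).toReal
      < (dbar μ ν).toReal + δ := by
    have := (ENNReal.toReal_lt_toReal htne (by
      exact ENNReal.add_ne_top.2 ⟨hdtop, ENNReal.ofReal_ne_top⟩)).2 htlt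
    rwa [ENNReal.toReal_add hdtop ENNReal.ofReal_ne_top,
      ENNReal.toReal_ofReal hδpos.le] at this
  have hdist : dist ((m {p : Config d × Config d | p.1 0 ≠ p.2 0}).toReal)
      ((dbar μ ν).toReal) < δ := by
    rw [Real.dist_eq, abs_sub_lt_iff]
    constructor <;> linarith
  have := hδ hdist
  rw [Real.dist_eq, abs_sub_lt_iff] at this
  linarith [h1, this.1]

end
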